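/- Let k(t,s)=𝔎(t−s), where 𝔎:(0,∞)→ℝ is continuous and satisfies |𝔎(t)|≤M t^{β−1} e^{γt} for all t>0, for some constants M,γ≥0 and β∈(0,1]. Then k satisfies Assumption (K) with α*=1−β, and the coefficients c_n satisfy e^{−γt}|c_n(t)| ≤ (MΓ(β)t^β)^n / Γ(nβ+1) for every n∈ℕ and t>0; consequently, for every λ∈ℂ and t≥0, ∑_{n=0}^∞ |c_n(t)||λ|^n ≤ e^{γt} E_β(MΓ(β)|λ|t^β). -/

import Mathlib

open MeasureTheory Filter

noncomputable section

noncomputable def coeff (k : ℝ → ℝ → ℝ) : ℕ → ℝ → ℝ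
  | 0, _ => 1
  | n + 1, t => if 0 < t then ∫ s in Set.Ioc (0:ℝ) t, k t s * coeff k n s else 0

noncomputable def Phi (k : ℝ → ℝ → ℝ) (t : ℝ) (l : ℂ) : ℂ :=
  ∑' n : ℕ, (coeff k n t : ℂ) * l ^ n

noncomputable def PhiR (k : ℝ → ℝ → ℝ) (t : ℝ) (x : ℝ) : ℝ :=
  ∑' n : ℕ, coeff k n t * x ^ n

noncomputable def mlR (ρ : ℝ) (x : ℝ) : ℝ :=
  ∑' n : ℕ, x ^ n / Real.Gamma (ρ * (n : ℝ) + 1)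

open Set in
lemma gammaFloorBound {y : ℝ} (hy : 1 ≤ y) :
    ((Nat.floor (y - 1)).factorial : ℝ) / 6 ≤ Real.Gamma y := by
  set m := Nat.floor (y - 1) with hm
  have hy0 : 0 < y := lt_of_lt_of_le one_pos hy
  rcases Nat.eq_zero_or_pos m with h0 | h1
  · -- y - 1 < 1, i.e. y < 2
    have hylt : y - 1 < 1 := by
      have := Nat.lt_floor_add_one (y - 1)
      -- not directly; use floor = 0
      have : y - 1 < (m : ℝ) + 1 := Nat.lt_floor_add_one (y-1)
      simpa [h0] using this
    have hy2 : y < 2 := by linarith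
    have key : Real.Gamma (y + 2) = (y+1) * (y * Real.Gamma y) := by
      have h1' : Real.Gamma (y + 1) = y * Real.Gamma y := Real.Gamma_add_one hy0.ne'
      have h2' : Real.Gamma (y + 1 + 1) = (y+1) * Real.Gamma (y+1) :=
        Real.Gamma_add_one (by positivity)
      rw [show y + 2 = y + 1 + 1 by ring, h2', h1']
    have hmono : Real.Gamma 2 ≤ Real.Gamma (y + 2) := by
      have := Real.Gamma_strictMonoOn_Ici.monotoneOn (a := 2) (b := y + 2)
        (by simp) (by simp [Set.mem_Ici]; linarith) (by linarith)
      exact this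
    have hG2 : Real.Gamma 2 = 1 := by
      have := Real.Gamma_add_one (one_ne_zero (α := ℝ))
      simpa [Real.Gamma_one] using this
    have hGy : 0 < Real.Gamma y := Real.Gamma_pos_of_pos hy0
    have h6 : (1:ℝ) ≤ (y+1) * (y * Real.Gamma y) := by
      rw [key] at hmono; rwa [hG2] at hmono
    have hfac : (m.factorial : ℝ) = 1 := by rw [h0]; norm_num
    rw [hfac]
    have hq : y * (y+1) ≤ 6 := by nlinarith
    have hub : (y+1) * (y * Real.Gamma y) ≤ 6 * Real.Gamma y := by
      calc (y+1) * (y * Real.Gamma y) = (y*(y+1)) * Real.Gamma y := by ring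
        _ ≤ 6 * Real.Gamma y := mul_le_mul_of_nonneg_right hq hGy.le
    linarith
  · -- m ≥ 1, so y ≥ m + 1 ≥ 2
    have hle : (m : ℝ) ≤ y - 1 := Nat.floor_le (by linarith)
    have h2y : (m : ℝ) + 1 ≤ y := by linarith
    have hm2 : (2:ℝ) ≤ (m:ℝ) + 1 := by exact_mod_cast Nat.succ_le_succ h1
    have hmono : Real.Gamma ((m:ℝ) + 1) ≤ Real.Gamma y :=
      Real.Gamma_strictMonoOn_Ici.monotoneOn (by simpa [Set.mem_Ici] using hm2)
        (by simp [Set.mem_Ici]; linarith) h2y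
    rw [Real.Gamma_nat_eq_factorial] at hmono
    have : (0:ℝ) ≤ m.factorial := by positivity
    linarith

lemma summable_ml {β x : ℝ} (hβ0 : 0 < β) (hx : 0 ≤ x) :
    Summable fun n : ℕ => x ^ n / Real.Gamma (β * n + 1) := by
  set c : ℝ := max 1 ((2*x) ^ (1/β)) with hc
  have hc1 : (1:ℝ) ≤ c := le_max_left _ _
  have hc0 : 0 < c := lt_of_lt_of_le one_pos hc1
  have h2x : (0:ℝ) ≤ 2*x := by linarith
  have hd : 2 * x ≤ c ^ β := by
    rcases le_or_gt (2*x) 1 with h | h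
    · calc 2*x ≤ 1 := h
        _ ≤ c ^ β := Real.one_le_rpow hc1 hβ0.le
    · calc 2*x = ((2*x) ^ (1/β)) ^ β := by
            rw [← Real.rpow_mul h2x, one_div, inv_mul_cancel₀ hβ0.ne', Real.rpow_one]
        _ ≤ c ^ β := Real.rpow_le_rpow (Real.rpow_nonneg h2x _) (le_max_right _ _) hβ0.le
  have hcβ : 0 < c ^ β := Real.rpow_pos_of_pos hc0 _
  have hxd : x / c ^ β ≤ 1/2 := by
    rw [div_le_iff₀ hcβ]; linarith
  have hxd' : (0:ℝ) ≤ x / c ^ β := by positivity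
  have key : ∀ n : ℕ, x ^ n / Real.Gamma (β * n + 1) ≤
      (6 * (Real.exp c * c)) * (1/2) ^ n := by
    intro n
    set m : ℕ := Nat.floor (β * n) with hm
    have hβn : (0:ℝ) ≤ β * n := by positivity
    have hy : (1:ℝ) ≤ β * n + 1 := by linarith
    have hG : (m.factorial : ℝ) / 6 ≤ Real.Gamma (β * n + 1) := by
      have := gammaFloorBound hy
      simpa [hm] using this
    have hGpos : 0 < Real.Gamma (β * n + 1) := Real.Gamma_pos_of_pos (by linarith)
    have hfacpos : (0:ℝ) < m.factorial := by positivity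
    have hbn : (0:ℝ) < (c^β)^n := pow_pos hcβ n
    have hcm : (0:ℝ) < c ^ (m:ℝ) := Real.rpow_pos_of_pos hc0 _
    -- c^m/m! ≤ exp c
    have hexp : c ^ m / (m.factorial:ℝ) ≤ Real.exp c := by
      calc c ^ m / (m.factorial:ℝ) ≤ ∑ i ∈ Finset.range (m+1), c ^ i / i.factorial := by
            refine Finset.single_le_sum (f := fun i => c ^ i / (i.factorial:ℝ))
              (fun i _ => by positivity) (Finset.self_mem_range_succ m)
        _ ≤ Real.exp c := Real.sum_le_exp_of_nonneg hc0.le _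
    have hinv : (1:ℝ) / m.factorial ≤ Real.exp c / c ^ (m:ℝ) := by
      rw [Real.rpow_natCast, div_le_div_iff₀ hfacpos (pow_pos hc0 m), one_mul]
      rw [div_le_iff₀ hfacpos] at hexp
      linarith
    have e2 : (c^β)^n / c = c ^ (β * n - 1) := by
      rw [Real.rpow_sub hc0, Real.rpow_one, Real.rpow_mul hc0.le, Real.rpow_natCast]
    have hden : Real.exp c / c ^ (m:ℝ) ≤ Real.exp c / ((c^β)^n / c) := by
      refine div_le_div_of_nonneg_left (Real.exp_pos c).le (by positivity) ?_
      rw [e2]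
      exact Real.rpow_le_rpow_of_exponent_le hc1 (Nat.sub_one_lt_floor (β * n)).le
    have hxn : (0:ℝ) ≤ x ^ n := by positivity
    have h1 : x ^ n / Real.Gamma (β * n + 1) ≤ x ^ n * (6 / m.factorial) := by
      rw [div_eq_mul_inv]
      refine mul_le_mul_of_nonneg_left ?_ hxn
      rw [inv_le_comm₀ hGpos (by positivity)]
      calc (6 / (m.factorial:ℝ))⁻¹ = m.factorial / 6 := by
            field_simp
        _ ≤ Real.Gamma (β * n + 1) := hG
    calc x ^ n / Real.Gamma (β * n + 1) ≤ x ^ n * (6 / m.factorial) := h1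
      _ = 6 * (x ^ n * (1 / m.factorial)) := by ring
      _ ≤ 6 * (x ^ n * (Real.exp c / c ^ (m:ℝ))) := by
            refine mul_le_mul_of_nonneg_left (mul_le_mul_of_nonneg_left hinv hxn) (by norm_num)
      _ ≤ 6 * (x ^ n * (Real.exp c / ((c^β)^n / c))) := by
            refine mul_le_mul_of_nonneg_left (mul_le_mul_of_nonneg_left hden hxn) (by norm_num)
      _ = 6 * (Real.exp c * c * (x / c^β) ^ n) := by
            rw [div_pow]; field_simp
      _ ≤ 6 * (Real.exp c * c * (1/2) ^ n) := by
            refine mul_le_mul_of_nonneg_left (mul_le_mul_of_nonneg_left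
              (pow_le_pow_left₀ hxd' hxd n) (by positivity)) (by norm_num)
      _ = (6 * (Real.exp c * c)) * (1/2) ^ n := by ring
  refine Summable.of_nonneg_of_le (fun n => by positivity) key ?_
  exact (summable_geometric_of_lt_one (by norm_num) (by norm_num)).mul_left _

lemma betaIntegrableOn {a b t : ℝ} (ha : 0 < a) (hb : 1 ≤ b) (ht : 0 < t) :
    IntegrableOn (fun s => (t - s) ^ (a - 1) * s ^ (b - 1)) (Set.Ioc 0 t) := by
  have h1 : IntervalIntegrable (fun u : ℝ => u ^ (a - 1)) volume 0 t :=
    intervalIntegral.intervalIntegrable_rpow' (by linarith)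
  have h2 : IntervalIntegrable (fun s : ℝ => (t - s) ^ (a - 1)) volume 0 t := by
    have := (h1.comp_sub_left t).symm
    simpa using this
  have h3 : IntegrableOn (fun s : ℝ => (t - s) ^ (a - 1)) (Set.Ioc 0 t) :=
    (intervalIntegrable_iff_integrableOn_Ioc_of_le ht.le).mp h2
  have h4 : AEStronglyMeasurable (fun s : ℝ => s ^ (b - 1))
      (volume.restrict (Set.Ioc 0 t)) :=
    (measurable_id.pow_const _).aestronglyMeasurable -- fix
  have h5 : ∀ᵐ s ∂(volume.restrict (Set.Ioc 0 t)), ‖(fun s : ℝ => s ^ (b-1)) s‖ ≤ t ^ (b-1) := by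
    filter_upwards [ae_restrict_mem measurableSet_Ioc] with s hs
    rw [Real.norm_eq_abs, _root_.abs_of_nonneg (Real.rpow_nonneg hs.1.le _)]
    exact Real.rpow_le_rpow hs.1.le hs.2 (by linarith)
  have := h3.bdd_mul h4 h5
  exact this.congr (Filter.Eventually.of_forall fun s => mul_comm _ _)

lemma realBeta {a b t : ℝ} (ha : 0 < a) (hb : 0 < b) (ht : 0 < t) :
    ∫ s in Set.Ioc (0:ℝ) t, (t - s) ^ (a - 1) * s ^ (b - 1) =
      t ^ (a + b - 1) * (Real.Gamma a * Real.Gamma b / Real.Gamma (a + b)) := by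
  have ha' : 0 < (a : ℂ).re := by simpa using ha
  have hb' : 0 < (b : ℂ).re := by simpa using hb
  -- scaled beta
  have hscaled := Complex.betaIntegral_scaled (b : ℂ) (a : ℂ) ht
  have hGamma := Complex.Gamma_mul_Gamma_eq_betaIntegral hb' ha'
  have hGab : Real.Gamma (b + a) ≠ 0 := (Real.Gamma_pos_of_pos (by linarith)).ne'
  have hGabC : Complex.Gamma ((b : ℂ) + a) = (Real.Gamma (b + a) : ℂ) := by
    rw [← Complex.ofReal_add, Complex.Gamma_ofReal]
  have hbeta : Complex.betaIntegral (b : ℂ) (a : ℂ) =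
      ((Real.Gamma b * Real.Gamma a / Real.Gamma (b + a) : ℝ) : ℂ) := by
    have hne : (Real.Gamma (b+a) : ℂ) ≠ 0 := by exact_mod_cast hGab
    rw [hGabC] at hGamma
    field_simp
    rw [Complex.ofReal_div, Complex.ofReal_mul, eq_div_iff hne, mul_comm ((b:ℂ).betaIntegral a), ← hGamma, Complex.Gamma_ofReal, Complex.Gamma_ofReal]
  -- now identify the complex interval integral with the real one
  have hlhs : (∫ x in (0:ℝ)..t, (x:ℂ) ^ ((b:ℂ) - 1) * ((t:ℂ) - x) ^ ((a:ℂ) - 1)) =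
      ((∫ s in Set.Ioc (0:ℝ) t, (t - s) ^ (a - 1) * s ^ (b - 1) : ℝ) : ℂ) := by
    rw [intervalIntegral.integral_of_le ht.le]
    have hoi := integral_ofReal (𝕜 := ℂ) (f := fun s => (t-s)^(a-1)*s^(b-1))
      (μ := volume.restrict (Set.Ioc 0 t))
    refine Eq.trans ?_ hoi
    refine setIntegral_congr_fun measurableSet_Ioc fun x hx => ?_
    have hx0 : (0:ℝ) ≤ x := hx.1.le
    have htx : (0:ℝ) ≤ t - x := by linarith [hx.2]
    show (x:ℂ) ^ ((b:ℂ) - 1) * ((t:ℂ) - x) ^ ((a:ℂ) - 1)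
      = Complex.ofReal ((t - x) ^ (a - 1) * x ^ (b - 1))
    rw [Complex.ofReal_mul, Complex.ofReal_cpow hx0, Complex.ofReal_cpow htx]
    push_cast
    ring
  rw [hlhs, hbeta] at hscaled
  have hrhs : ((t:ℂ) ^ ((b:ℂ) + a - 1)) = ((t ^ (b + a - 1) : ℝ) : ℂ) := by
    have he : ((b:ℂ) + a - 1) = ((b + a - 1 : ℝ) : ℂ) := by push_cast; ring
    rw [he, ← Complex.ofReal_cpow ht.le]
  rw [hrhs] at hscaled
  have : ((∫ s in Set.Ioc (0:ℝ) t, (t - s) ^ (a - 1) * s ^ (b - 1) : ℝ) : ℂ) =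
      ((t ^ (b + a - 1) * (Real.Gamma b * Real.Gamma a / Real.Gamma (b + a)) : ℝ) : ℂ) := by
    rw [hscaled]; push_cast; ring
  have := Complex.ofReal_inj.mp this
  rw [this]
  rw [show a + b - 1 = b + a - 1 by ring, show a + b = b + a by ring]
  ring

lemma coeffBound (K : ℝ → ℝ) (M γ β : ℝ) (hM : 0 ≤ M) (hγ : 0 ≤ γ)
    (hβ0 : 0 < β) (hβ1 : β ≤ 1)
    (hKb : ∀ t : ℝ, 0 < t → |K t| ≤ M * t ^ (β - 1) * Real.exp (γ * t))
    (k : ℝ → ℝ → ℝ) (hk : ∀ t s, k t s = K (t - s)) :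
    ∀ n : ℕ, ∀ t : ℝ, 0 < t →
      Real.exp (-(γ * t)) * |coeff k n t| ≤
        (M * Real.Gamma β * t ^ β) ^ n / Real.Gamma ((n : ℝ) * β + 1) := by
  intro n
  induction n with
  | zero =>
    intro t ht
    simp only [coeff, pow_zero, Nat.cast_zero, zero_mul, zero_add, Real.Gamma_one, abs_one,
      mul_one]
    rw [div_one]
    exact Real.exp_le_one_iff.mpr (by nlinarith)
  | succ n ih =>
    intro t ht
    have hGβ : 0 < Real.Gamma β := Real.Gamma_pos_of_pos hβ0
    have hGn : 0 < Real.Gamma ((n:ℝ) * β + 1) := Real.Gamma_pos_of_pos (by positivity)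
    set b : ℝ := (n:ℝ) * β + 1 with hbdef
    have hb1 : 1 ≤ b := by
      have : (0:ℝ) ≤ (n:ℝ) * β := by positivity
      rw [hbdef]; linarith
    have hb0 : 0 < b := by linarith
    set C : ℝ := Real.exp (γ * t) * (M * ((M * Real.Gamma β) ^ n / Real.Gamma ((n:ℝ)*β+1)))
      with hC
    have hC0 : 0 ≤ C := by positivity
    -- the dominating function
    have hint : IntegrableOn (fun s => C * ((t - s) ^ (β - 1) * s ^ (b - 1)))
        (Set.Ioc 0 t) := (betaIntegrableOn hβ0 hb1 ht).const_mul C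
    -- a.e. bound
    have hae : ∀ᵐ s ∂(volume.restrict (Set.Ioc 0 t)),
        ‖k t s * coeff k n s‖ ≤ C * ((t - s) ^ (β - 1) * s ^ (b - 1)) := by
      have hmem := ae_restrict_mem (μ := volume) measurableSet_Ioc (s := Set.Ioc (0:ℝ) t)
      have hne : ∀ᵐ s ∂(volume.restrict (Set.Ioc 0 t)), s ≠ t := by
        refine ae_restrict_of_ae ?_
        refine (ae_iff).mpr ?_
        simpa using (Real.volume_singleton (a := t))
      filter_upwards [hmem, hne] with s hs hst
      have hs0 : 0 < s := hs.1
      have hst' : s < t := lt_of_le_of_ne hs.2 hst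
      have hts : 0 < t - s := by linarith
      have h1 : |K (t - s)| ≤ M * (t-s) ^ (β - 1) * Real.exp (γ * (t-s)) := hKb _ hts
      have h2 : |coeff k n s| ≤ Real.exp (γ * s) *
          ((M * Real.Gamma β * s ^ β) ^ n / Real.Gamma ((n:ℝ) * β + 1)) := by
        have h := ih s hs0
        calc |coeff k n s| = Real.exp (γ*s) * (Real.exp (-(γ*s)) * |coeff k n s|) := by
              rw [← mul_assoc, ← Real.exp_add]; simp
          _ ≤ Real.exp (γ*s) * ((M * Real.Gamma β * s ^ β) ^ n / Real.Gamma ((n:ℝ) * β + 1)) :=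
              mul_le_mul_of_nonneg_left h (Real.exp_pos _).le
      rw [Real.norm_eq_abs, abs_mul, hk]
      calc |K (t-s)| * |coeff k n s|
          ≤ (M * (t-s) ^ (β - 1) * Real.exp (γ * (t-s))) * (Real.exp (γ * s) *
            ((M * Real.Gamma β * s ^ β) ^ n / Real.Gamma ((n:ℝ) * β + 1))) := by
            exact mul_le_mul h1 h2 (abs_nonneg _) (by positivity)
        _ = C * ((t - s) ^ (β - 1) * s ^ (b - 1)) := by
            have he : Real.exp (γ*(t-s)) * Real.exp (γ*s) = Real.exp (γ*t) := by
              rw [← Real.exp_add]; congr 1; ring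
            have hsb : (s ^ β) ^ n = s ^ (b - 1) := by
              rw [← Real.rpow_natCast (s ^ β) n, ← Real.rpow_mul hs0.le]
              congr 1
              push_cast [hbdef]
              ring
            rw [hC, ← he, mul_pow, hsb]
            ring
    -- main estimate
    have hcoeff : coeff k (n+1) t = ∫ s in Set.Ioc (0:ℝ) t, k t s * coeff k n s := by
      simp [coeff, ht]
    have hnorm : |coeff k (n+1) t| ≤ ∫ s in Set.Ioc (0:ℝ) t,
        C * ((t - s) ^ (β - 1) * s ^ (b - 1)) := by
      rw [hcoeff, ← Real.norm_eq_abs]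
      exact norm_integral_le_of_norm_le hint hae
    have hval : ∫ s in Set.Ioc (0:ℝ) t, C * ((t - s) ^ (β - 1) * s ^ (b - 1)) =
        C * (t ^ (β + b - 1) * (Real.Gamma β * Real.Gamma b / Real.Gamma (β + b))) := by
      rw [integral_const_mul, realBeta hβ0 hb0 ht]
    have hGn1 : 0 < Real.Gamma (β + b) := Real.Gamma_pos_of_pos (by linarith)
    have hfinal : Real.exp (-(γ * t)) * |coeff k (n+1) t| ≤
        Real.exp (-(γ * t)) * (C * (t ^ (β + b - 1) *
          (Real.Gamma β * Real.Gamma b / Real.Gamma (β + b)))) := by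
      refine mul_le_mul_of_nonneg_left ?_ (Real.exp_pos _).le
      rw [← hval]
      exact hnorm
    refine hfinal.trans_eq ?_
    rw [hC]
    have hexp : Real.exp (-(γ * t)) * Real.exp (γ * t) = 1 := by
      rw [← Real.exp_add]; simp
    have htb : t ^ (β + b - 1) = (t ^ β) ^ (n+1) := by
      rw [← Real.rpow_natCast (t ^ β) (n+1), ← Real.rpow_mul ht.le]
      congr 1
      push_cast [hbdef]
      ring
    have hGb : Real.Gamma b = Real.Gamma ((n:ℝ) * β + 1) := by rw [hbdef]
    have hGsum : Real.Gamma (β + b) = Real.Gamma (((n:ℝ)+1) * β + 1) := by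
      rw [hbdef]; congr 1; ring
    rw [htb, hGb, hGsum, Real.exp_neg]
    push_cast
    have g1 : Real.Gamma ((n:ℝ)*β+1) ≠ 0 := hGn.ne'
    have g2 : Real.Gamma (((n:ℝ)+1)*β+1) ≠ 0 := by rw [← hGsum]; exact hGn1.ne'
    have g3 : Real.exp (γ*t) ≠ 0 := Real.exp_ne_zero _
    field_simp
    ring

lemma part1 (K : ℝ → ℝ) (hKc : ContinuousOn K (Set.Ioi 0))
    (M γ β : ℝ) (hM : 0 ≤ M) (hγ : 0 ≤ γ) (hβ0 : 0 < β) (hβ1 : β ≤ 1)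
    (hKb : ∀ t : ℝ, 0 < t → |K t| ≤ M * t ^ (β - 1) * Real.exp (γ * t))
    (k : ℝ → ℝ → ℝ) (hk : ∀ t s, k t s = K (t - s)) :
    ∃ ε : ℝ, 0 < ε ∧ ∀ T : ℝ, 0 < T → ∃ KT : ℝ, ∀ t : ℝ, 0 < t → t ≤ T →
      MeasureTheory.IntegrableOn (fun s => |k t s| ^ (1 + ε)) (Set.Ioc 0 t) ∧
      t ^ ((1 - β) - 1 / (1 + ε)) *
        (∫ s in Set.Ioc (0:ℝ) t, |k t s| ^ (1 + ε)) ^ (1 / (1 + ε)) ≤ KT := by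
  have h2β : 0 < 2 - β := by linarith
  set ε : ℝ := β / (2 - β) with hε
  have hε0 : 0 < ε := by positivity
  set p : ℝ := 1 + ε with hp
  have hp1 : 1 ≤ p := by linarith
  have hp0 : 0 < p := by linarith
  have hq : (β - 1) * p + 1 = ε := by
    rw [hp, hε]; field_simp; ring
  clear_value ε p
  refine ⟨ε, hε0, fun T hT => ⟨M * Real.exp (γ * T) * (ε⁻¹) ^ (1 / p), fun t ht htT => ?_⟩⟩
  rw [← hp]
  set D : ℝ := (M * Real.exp (γ * T)) ^ p with hD
  have hMe : (0:ℝ) ≤ M * Real.exp (γ * T) := by positivity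
  have hD0 : (0:ℝ) ≤ D := Real.rpow_nonneg hMe _
  -- pointwise bound on Ioo
  have hbd : ∀ s ∈ Set.Ioo (0:ℝ) t, |k t s| ^ p ≤ D * (t - s) ^ ((β - 1) * p) := by
    intro s hs
    have hts : 0 < t - s := by linarith [hs.2]
    have h1 : |K (t - s)| ≤ M * Real.exp (γ * T) * (t - s) ^ (β - 1) := by
      calc |K (t - s)| ≤ M * (t-s) ^ (β - 1) * Real.exp (γ * (t-s)) := hKb _ hts
        _ ≤ M * (t-s) ^ (β - 1) * Real.exp (γ * T) := by
            refine mul_le_mul_of_nonneg_left (Real.exp_le_exp.mpr ?_)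
              (by positivity)
            nlinarith [hs.1]
        _ = M * Real.exp (γ * T) * (t - s) ^ (β - 1) := by ring
    calc |k t s| ^ p ≤ (M * Real.exp (γ * T) * (t - s) ^ (β - 1)) ^ p := by
          rw [hk]
          exact Real.rpow_le_rpow (abs_nonneg _) h1 hp0.le
      _ = D * (t - s) ^ ((β - 1) * p) := by
          rw [Real.mul_rpow hMe (Real.rpow_nonneg hts.le _), ← Real.rpow_mul hts.le, hD]
  -- dominating function integrable with known integral
  have hbeta := betaIntegrableOn (a := ε) (b := 1) (t := t) hε0 le_rfl ht
  have hgint : IntegrableOn (fun s => D * (t - s) ^ ((β - 1) * p)) (Set.Ioc 0 t) := by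
    have h2 := (hbeta.const_mul D)
    refine h2.congr (Filter.Eventually.of_forall fun s => ?_)
    have he : (β - 1) * p = ε - 1 := by linarith [hq]
    rw [he]
    norm_num
  -- measurability of the integrand
  have hres : volume.restrict (Set.Ioc (0:ℝ) t) = volume.restrict (Set.Ioo (0:ℝ) t) :=
    (Measure.restrict_congr_set Ioo_ae_eq_Ioc).symm
  have hmeas : AEStronglyMeasurable (fun s => |k t s| ^ p)
      (volume.restrict (Set.Ioc (0:ℝ) t)) := by
    rw [hres]
    refine ContinuousOn.aestronglyMeasurable ?_ measurableSet_Ioo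
    have hc1 : ContinuousOn (fun s : ℝ => K (t - s)) (Set.Ioo 0 t) := by
      refine hKc.comp ((continuous_const.sub continuous_id).continuousOn) ?_
      intro s hs
      simp only [Set.mem_Ioi]
      linarith [hs.2]
    have hc2 : ContinuousOn (fun s : ℝ => |K (t - s)| ^ p) (Set.Ioo 0 t) :=
      (hc1.abs).rpow_const (fun x _ => Or.inr hp0.le)
    refine hc2.congr fun s _ => ?_
    rw [hk]
  have hfae : ∀ᵐ s ∂(volume.restrict (Set.Ioc (0:ℝ) t)),
      ‖|k t s| ^ p‖ ≤ D * (t - s) ^ ((β - 1) * p) := by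
    rw [hres]
    filter_upwards [ae_restrict_mem measurableSet_Ioo] with s hs
    rw [Real.norm_eq_abs, abs_of_nonneg (Real.rpow_nonneg (abs_nonneg _) _)]
    exact hbd s hs
  have hfint : IntegrableOn (fun s => |k t s| ^ p) (Set.Ioc 0 t) :=
    Integrable.mono' hgint hmeas hfae
  refine ⟨hfint, ?_⟩
  -- integral bound
  have hmono : (∫ s in Set.Ioc (0:ℝ) t, |k t s| ^ p) ≤
      ∫ s in Set.Ioc (0:ℝ) t, D * (t - s) ^ ((β - 1) * p) := by
    refine integral_mono_ae hfint hgint ?_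
    rw [hres]
    filter_upwards [ae_restrict_mem measurableSet_Ioo] with s hs
    exact hbd s hs
  have hval : (∫ s in Set.Ioc (0:ℝ) t, D * (t - s) ^ ((β - 1) * p)) = D * (t ^ ε / ε) := by
    rw [integral_const_mul]
    have he : (β - 1) * p = ε - 1 := by linarith [hq]
    have hcong : ∀ s ∈ Set.Ioc (0:ℝ) t, (t - s) ^ ((β-1)*p) = (t - s) ^ (ε - 1) * s ^ ((1:ℝ) - 1) := by
      intro s hs
      rw [he]
      norm_num
    rw [setIntegral_congr_fun measurableSet_Ioc hcong, realBeta hε0 one_pos ht]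
    rw [Real.Gamma_one]
    rw [Real.Gamma_add_one hε0.ne']
    have hGε : 0 < Real.Gamma ε := Real.Gamma_pos_of_pos hε0
    rw [show ε + 1 - 1 = ε by ring]
    field_simp
  have hInn : (0:ℝ) ≤ ∫ s in Set.Ioc (0:ℝ) t, |k t s| ^ p :=
    integral_nonneg fun s => Real.rpow_nonneg (abs_nonneg _) _
  have hstep : (∫ s in Set.Ioc (0:ℝ) t, |k t s| ^ p) ^ (1/p) ≤ (D * (t ^ ε / ε)) ^ (1/p) := by
    refine Real.rpow_le_rpow hInn ?_ (by positivity)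
    rw [← hval]; exact hmono
  have htpow : 0 ≤ t ^ ((1:ℝ) - β - 1/p) := Real.rpow_nonneg ht.le _
  calc t ^ ((1:ℝ) - β - 1/p) * (∫ s in Set.Ioc (0:ℝ) t, |k t s| ^ p) ^ (1/p)
      ≤ t ^ ((1:ℝ) - β - 1/p) * (D * (t ^ ε / ε)) ^ (1/p) :=
        mul_le_mul_of_nonneg_left hstep htpow
    _ = M * Real.exp (γ * T) * (ε⁻¹) ^ (1/p) := by
        have htε : (0:ℝ) ≤ t ^ ε := Real.rpow_nonneg ht.le _
        rw [div_eq_mul_inv (t ^ ε) ε]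
        rw [Real.mul_rpow hD0 (by positivity), Real.mul_rpow htε (by positivity)]
        have hDp : D ^ (1/p) = M * Real.exp (γ*T) := by
          rw [hD, ← Real.rpow_mul hMe, mul_one_div, div_self hp0.ne', Real.rpow_one]
        have htε2 : (t^ε)^(1/p) = t ^ (ε/p) := by
          rw [← Real.rpow_mul ht.le, mul_one_div]
        have hzero : (1:ℝ) - β - 1/p + ε/p = 0 := by
          field_simp
          nlinarith [hq]
        have hexps : t ^ ((1:ℝ) - β - 1/p) * t ^ (ε/p) = 1 := by
          rw [← Real.rpow_add ht, hzero, Real.rpow_zero]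
        rw [hDp, htε2]
        calc t ^ ((1:ℝ) - β - 1/p) * (M*Real.exp (γ*T) * (t^(ε/p) * (ε⁻¹)^(1/p)))
            = (t ^ ((1:ℝ)-β-1/p) * t^(ε/p)) * (M*Real.exp (γ*T) * (ε⁻¹)^(1/p)) := by ring
          _ = M*Real.exp (γ*T) * (ε⁻¹)^(1/p) := by rw [hexps, one_mul]

theorem stmt14 (K : ℝ → ℝ) (hKc : ContinuousOn K (Set.Ioi 0))
    (M γ β : ℝ) (hM : 0 ≤ M) (hγ : 0 ≤ γ) (hβ0 : 0 < β) (hβ1 : β ≤ 1)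
    (hKb : ∀ t : ℝ, 0 < t → |K t| ≤ M * t ^ (β - 1) * Real.exp (γ * t))
    (k : ℝ → ℝ → ℝ) (hk : ∀ t s, k t s = K (t - s)) :
    (∃ ε : ℝ, 0 < ε ∧ ∀ T : ℝ, 0 < T → ∃ KT : ℝ, ∀ t : ℝ, 0 < t → t ≤ T →
      MeasureTheory.IntegrableOn (fun s => |k t s| ^ (1 + ε)) (Set.Ioc 0 t) ∧
      t ^ ((1 - β) - 1 / (1 + ε)) *
        (∫ s in Set.Ioc (0:ℝ) t, |k t s| ^ (1 + ε)) ^ (1 / (1 + ε)) ≤ KT) ∧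
    (∀ n : ℕ, ∀ t : ℝ, 0 < t →
      Real.exp (-(γ * t)) * |coeff k n t| ≤
        (M * Real.Gamma β * t ^ β) ^ n / Real.Gamma ((n : ℝ) * β + 1)) ∧
    (∀ z : ℂ, ∀ t : ℝ, 0 ≤ t →
      Summable (fun n : ℕ => |coeff k n t| * ‖z‖ ^ n) ∧
      (∑' n : ℕ, |coeff k n t| * ‖z‖ ^ n) ≤
        Real.exp (γ * t) * mlR β (M * Real.Gamma β * ‖z‖ * t ^ β)) := by
  refine ⟨part1 K hKc M γ β hM hγ hβ0 hβ1 hKb k hk,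
    coeffBound K M γ β hM hγ hβ0 hβ1 hKb k hk, ?_⟩
  intro z t ht0
  have hGβ : 0 < Real.Gamma β := Real.Gamma_pos_of_pos hβ0
  set x : ℝ := M * Real.Gamma β * ‖z‖ * t ^ β with hx
  have hx0 : 0 ≤ x := by positivity
  have hbound : ∀ n : ℕ, |coeff k n t| * ‖z‖ ^ n ≤
      Real.exp (γ * t) * (x ^ n / Real.Gamma (β * (n:ℝ) + 1)) := by
    intro n
    have hGn : 0 < Real.Gamma (β * (n:ℝ) + 1) := Real.Gamma_pos_of_pos (by positivity)
    rcases eq_or_lt_of_le ht0 with h0 | hpos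
    · -- t = 0
      cases n with
      | zero =>
        simp only [coeff, pow_zero, mul_one, abs_one, Nat.cast_zero, mul_zero, zero_add,
          Real.Gamma_one, div_one]
        rw [← h0]
        simp
      | succ m =>
        have : coeff k (m+1) t = 0 := by
          rw [← h0]; simp [coeff]
        rw [this]
        simp only [abs_zero, zero_mul]
        positivity
    · -- t > 0
      have h := coeffBound K M γ β hM hγ hβ0 hβ1 hKb k hk n t hpos
      have h2 : |coeff k n t| ≤ Real.exp (γ * t) *
          ((M * Real.Gamma β * t ^ β) ^ n / Real.Gamma ((n:ℝ) * β + 1)) := by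
        calc |coeff k n t|
            = Real.exp (γ*t) * (Real.exp (-(γ*t)) * |coeff k n t|) := by
              rw [← mul_assoc, ← Real.exp_add]; simp
          _ ≤ Real.exp (γ*t) * ((M * Real.Gamma β * t ^ β) ^ n / Real.Gamma ((n:ℝ) * β + 1)) :=
              mul_le_mul_of_nonneg_left h (Real.exp_pos _).le
      calc |coeff k n t| * ‖z‖ ^ n
          ≤ (Real.exp (γ * t) *
            ((M * Real.Gamma β * t ^ β) ^ n / Real.Gamma ((n:ℝ) * β + 1))) * ‖z‖ ^ n :=
            mul_le_mul_of_nonneg_right h2 (by positivity)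
        _ = Real.exp (γ * t) * (x ^ n / Real.Gamma (β * (n:ℝ) + 1)) := by
            rw [hx, show M * Real.Gamma β * ‖z‖ * t ^ β
              = (M * Real.Gamma β * t ^ β) * ‖z‖ from by ring, mul_pow,
              mul_comm ((n:ℝ)) β]
            ring
  have hS : Summable (fun n : ℕ => Real.exp (γ * t) * (x ^ n / Real.Gamma (β * (n:ℝ) + 1))) :=
    (summable_ml hβ0 hx0).mul_left _
  have hL : Summable (fun n : ℕ => |coeff k n t| * ‖z‖ ^ n) :=
    Summable.of_nonneg_of_le (fun n => by positivity) hbound hS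
  refine ⟨hL, ?_⟩
  calc (∑' n : ℕ, |coeff k n t| * ‖z‖ ^ n)
      ≤ ∑' n : ℕ, Real.exp (γ * t) * (x ^ n / Real.Gamma (β * (n:ℝ) + 1)) :=
        hL.tsum_le_tsum hbound hS
    _ = Real.exp (γ * t) * mlR β x := by
        rw [tsum_mul_left, mlR]

end
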